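/- arXiv:1103.0092 — 4 statements merged into one kernel-verified Lean document; each statement's English description precedes it below -/
import Mathlib

section
/- Let G be a compact second countable Hausdorff topological group with normalized Haar probability measure λ̄, acting measurably on a measurable space (E, ℰ). Let X be a random element of E and let S be a random element of G that is uniformly distributed on G (its law is λ̄) and independent of X. Then the law of S⁻¹·X equals the law of X if and only if X is stationary, i.e. the law of t·X equals the law of X for every t ∈ G. -/
open MeasureTheory

/-- Let `G` be a compact second countable Hausdorff topological group with
normalized Haar probability measure `lam`, acting measurably on a measurable space `E`.
If `X` is a random element of `E` and `S` is uniformly distributed on `G` and independent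
of `X`, then `S⁻¹ • X` has the same law as `X` if and only if `X` is stationary. -/
theorem stmt1
    {G : Type*} [Group G] [TopologicalSpace G] [IsTopologicalGroup G] [CompactSpace G]
    [SecondCountableTopology G] [T2Space G] [MeasurableSpace G] [BorelSpace G]
    (lam : Measure G) [lam.IsHaarMeasure] [IsProbabilityMeasure lam]
    {E : Type*} [MeasurableSpace E] [MulAction G E]
    (hact : Measurable fun p : G × E => p.1 • p.2)
    {Ω : Type*} [MeasurableSpace Ω] (P : Measure Ω) [IsProbabilityMeasure P]
    (X : Ω → E) (S : Ω → G) (hX : Measurable X) (hS : Measurable S)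
    (hlaw : Measure.map S P = lam)
    (hindep : ProbabilityTheory.IndepFun S X P) :
    Measure.map (fun ω => (S ω)⁻¹ • X ω) P = Measure.map X P
      ↔ ∀ t : G, Measure.map (fun ω => t • X ω) P = Measure.map X P := by
  -- Haar measure on a compact group is right invariant
  haveI : lam.IsMulRightInvariant := by
    constructor
    intro g
    haveI : IsProbabilityMeasure (Measure.map (· * g) lam) :=
      Measure.isProbabilityMeasure_map (measurable_mul_const g).aemeasurable
    exact Measure.isHaarMeasure_eq_of_isProbabilityMeasure _ _
  set μ := Measure.map X P with hμ
  have hsmul : ∀ t : G, Measurable (fun x : E => t • x) := fun t =>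
    hact.comp (measurable_const.prodMk measurable_id)
  -- stationarity rephrased on μ
  have hstat : ∀ t : G, Measure.map (fun ω => t • X ω) P = Measure.map (t • ·) μ := by
    intro t
    rw [hμ, Measure.map_map (hsmul t) hX]
    rfl
  -- the key formula for the law of S⁻¹ • X
  have hg : Measurable (fun p : G × E => p.1⁻¹ • p.2) :=
    hact.comp ((measurable_fst.inv).prodMk measurable_snd)
  have hprod : Measure.map (fun ω => (S ω, X ω)) P = lam.prod μ := by
    rw [← hlaw, hμ]
    exact (ProbabilityTheory.indepFun_iff_map_prod_eq_prod_map_map hS.aemeasurable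
      hX.aemeasurable).1 hindep
  have hkey : ∀ A : Set E, MeasurableSet A →
      (Measure.map (fun ω => (S ω)⁻¹ • X ω) P) A
        = ∫⁻ t, μ ((fun x => t⁻¹ • x) ⁻¹' A) ∂lam := by
    intro A hA
    have h1 : (fun ω => (S ω)⁻¹ • X ω)
        = (fun p : G × E => p.1⁻¹ • p.2) ∘ (fun ω => (S ω, X ω)) := rfl
    rw [h1, ← Measure.map_map hg (hS.prodMk hX), hprod,
      Measure.map_apply hg hA, Measure.prod_apply (hg hA)]
    rfl
  constructor
  · -- forward: averaged invariance implies invariance for each t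
    intro h s
    have havg : ∀ A : Set E, MeasurableSet A →
        ∫⁻ t, μ ((fun x => t⁻¹ • x) ⁻¹' A) ∂lam = μ A := by
      intro A hA
      rw [← hkey A hA, h]
    rw [hstat s]
    ext A hA
    rw [Measure.map_apply (hsmul s) hA]
    have hsA : MeasurableSet ((fun x => s • x) ⁻¹' A) := hsmul s hA
    calc μ ((fun x => s • x) ⁻¹' A)
        = ∫⁻ t, μ ((fun x => t⁻¹ • x) ⁻¹' ((fun x => s • x) ⁻¹' A)) ∂lam :=
          (havg _ hsA).symm
      _ = ∫⁻ t, μ ((fun x => (t * s⁻¹)⁻¹ • x) ⁻¹' A) ∂lam := by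
          congr 1
          ext t
          congr 1
          ext x
          simp only [Set.mem_preimage, mul_inv_rev, inv_inv, mul_smul]
      _ = ∫⁻ t, μ ((fun x => t⁻¹ • x) ⁻¹' A) ∂lam :=
          lintegral_mul_right_eq_self (fun t => μ ((fun x => t⁻¹ • x) ⁻¹' A)) s⁻¹
      _ = μ A := havg A hA
  · -- backward: stationarity implies the averaged law is μ
    intro h
    ext A hA
    rw [hkey A hA]
    have : ∀ t : G, μ ((fun x => t⁻¹ • x) ⁻¹' A) = μ A := by
      intro t
      have := h t⁻¹
      rw [hstat t⁻¹] at this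
      rw [← Measure.map_apply (hsmul t⁻¹) hA, this]
    simp only [this]
    simp
end

section
/- Let G be a compact second countable Hausdorff topological group with Haar measure λ, acting measurably on (E, ℰ), and let X be a random element of E and ξ a random measure on G with 0 < ξ(G) < ∞ almost surely. Suppose the origin is a typical location for X in the mass of ξ, i.e. E[ξ(G)⁻¹ ∫ f(s⁻¹·(X,ξ)) ξ(ds)] = E[f(X,ξ)] for every measurable f : E × M(G) → [0,∞]. Let C ∈ 𝒢 satisfy λ(C) > 0 and assume that almost surely ξ(u⁻¹C) > 0 for λ-almost every u ∈ C. Then for every measurable g : (E × M(G)) × G → [0,∞]: E[ λ(C)⁻¹ ∫_C ξ(u⁻¹C)⁻¹ ∫_{u⁻¹C} g(v⁻¹·(X,ξ), uv) ξ(dv) λ(du) ] = E[ λ(C)⁻¹ ∫_C g((X,ξ), u) λ(du) ]. (This identity states that (V_C⁻¹·(X,ξ), U_C V_C) has the same distribution as ((X,ξ), U_C), where U_C is uniform on C independent of (X,ξ) and V_C has conditional distribution ξ(·|U_C⁻¹C) given (X,ξ,U_C).) -/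
open MeasureTheory
open scoped ENNReal

set_option linter.unusedSectionVars false
noncomputable section

/-- The shift `tμ` of a measure `μ` on a group `G`, with `(tμ)(A) = μ(t⁻¹A)`. -/
def smulM {G : Type*} [Group G] [MeasurableSpace G] (t : G) (μ : Measure G) : Measure G :=
  Measure.map (fun s => t * s) μ

/-- The action `t·(x,μ) = (t·x, tμ)` on pairs of a point of `E` and a measure on `G`. -/
def mact {G : Type*} [Group G] [MeasurableSpace G] {E : Type*} [MulAction G E]
    (t : G) (p : E × Measure G) : E × Measure G :=
  (t • p.1, smulM t p.2)

namespace Stmt2Aux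

variable {α β : Type*} [MeasurableSpace α] [MeasurableSpace β]

/-- Truncation of a measure: itself if finite, otherwise `0`. -/
def trunc (μ : Measure β) : Measure β := if μ Set.univ < ⊤ then μ else 0

lemma trunc_eq_self {μ : Measure β} (h : μ Set.univ < ⊤) : trunc μ = μ := if_pos h

lemma trunc_univ_lt_top (μ : Measure β) : trunc μ Set.univ < ⊤ := by
  unfold trunc; split
  · assumption
  · simp

lemma trunc_apply (μ : Measure β) (A : Set β) :
    trunc μ A = if μ Set.univ < ⊤ then μ A else 0 := by
  unfold trunc; split <;> simp

lemma measurableSet_finite : MeasurableSet {μ : Measure β | μ Set.univ < ⊤} :=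
  (Measure.measurable_coe MeasurableSet.univ) measurableSet_Iio

lemma measurable_trunc : Measurable (trunc : Measure β → Measure β) := by
  apply Measure.measurable_of_measurable_coe
  intro A hA
  simp_rw [trunc_apply]
  exact Measurable.ite measurableSet_finite (Measure.measurable_coe hA) measurable_const

/-- Parametric slice measurability for truncated measures. -/
lemma measurable_trunc_slice {s : Set (α × β)} (hs : MeasurableSet s) :
    Measurable fun p : α × Measure β => trunc p.2 (Prod.mk p.1 ⁻¹' s) := by
  classical
  refine MeasurableSpace.induction_on_inter
    (C := fun s _ => Measurable fun p : α × Measure β => trunc p.2 (Prod.mk p.1 ⁻¹' s))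
    generateFrom_prod.symm isPiSystem_prod ?_ ?_ ?_ ?_ _ hs
  · simp
  · rintro _ ⟨A, hA, B, hB, rfl⟩
    simp only [Set.mk_preimage_prod_right_eq_if, measure_if]
    exact Measurable.ite (measurable_fst hA)
      ((Measure.measurable_coe hB).comp (measurable_trunc.comp measurable_snd)) measurable_const
  · intro t ht h2t
    have : ∀ p : α × Measure β,
        trunc p.2 (Prod.mk p.1 ⁻¹' tᶜ) = trunc p.2 Set.univ - trunc p.2 (Prod.mk p.1 ⁻¹' t) := by
      intro p
      rw [Set.preimage_compl, measure_compl (measurable_prodMk_left ht)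
        ((measure_mono (Set.subset_univ _)).trans_lt (trunc_univ_lt_top _)).ne]
    simp_rw [this]
    exact ((Measure.measurable_coe MeasurableSet.univ).comp
      (measurable_trunc.comp measurable_snd)).sub h2t
  · intro f h1f h2f h3f
    simp_rw [Set.preimage_iUnion]
    have : ∀ p : α × Measure β,
        trunc p.2 (⋃ i, Prod.mk p.1 ⁻¹' f i) = ∑' i, trunc p.2 (Prod.mk p.1 ⁻¹' f i) := fun p =>
      measure_iUnion (fun i j hij => Disjoint.preimage _ (h1f hij)) fun i =>
        measurable_prodMk_left (h2f i)
    simp_rw [this]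
    exact Measurable.ennreal_tsum h3f

/-- Parametric integral measurability for truncated measures. -/
lemma measurable_trunc_lintegral {h : α × β → ℝ≥0∞} (hh : Measurable h) :
    Measurable fun p : α × Measure β => ∫⁻ b, h (p.1, b) ∂(trunc p.2) := by
  refine Measurable.ennreal_induction
    (motive := fun h : α × β → ℝ≥0∞ =>
      Measurable fun p : α × Measure β => ∫⁻ b, h (p.1, b) ∂(trunc p.2)) ?_ ?_ ?_ hh
  · intro c s hs
    have : ∀ p : α × Measure β,
        ∫⁻ b, Set.indicator s (fun _ => c) (p.1, b) ∂(trunc p.2)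
          = c * trunc p.2 (Prod.mk p.1 ⁻¹' s) := by
      intro p
      have : (fun b => Set.indicator s (fun _ => c) (p.1, b))
          = Set.indicator (Prod.mk p.1 ⁻¹' s) fun _ => c := by
        funext b
        by_cases hb : (p.1, b) ∈ s
        · rw [Set.indicator_of_mem hb]
          exact (Set.indicator_of_mem (show b ∈ Prod.mk p.1 ⁻¹' s from hb) (fun _ => c)).symm
        · rw [Set.indicator_of_notMem hb]
          exact (Set.indicator_of_notMem (show b ∉ Prod.mk p.1 ⁻¹' s from hb) (fun _ => c)).symm
      rw [this, lintegral_indicator_const (measurable_prodMk_left hs)]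
    simp_rw [this]
    exact (measurable_trunc_slice hs).const_mul _
  · rintro f f' - hf - h2f h2f'
    simp only [Pi.add_apply]
    have : ∀ p : α × Measure β,
        ∫⁻ b, f (p.1, b) + f' (p.1, b) ∂(trunc p.2)
          = (∫⁻ b, f (p.1, b) ∂(trunc p.2)) + ∫⁻ b, f' (p.1, b) ∂(trunc p.2) := fun p =>
      lintegral_add_left (hf.comp measurable_prodMk_left) _
    simp_rw [this]
    exact h2f.add h2f'
  · intro f hf h2f h3f
    have : ∀ p : α × Measure β,
        ∫⁻ b, ⨆ n, f n (p.1, b) ∂(trunc p.2) = ⨆ n, ∫⁻ b, f n (p.1, b) ∂(trunc p.2) := by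
      intro p
      exact lintegral_iSup (fun n => (hf n).comp measurable_prodMk_left)
        (fun i j hij b => h2f hij (p.1, b))
    simp_rw [this]
    exact Measurable.iSup h3f

section Group

variable {G : Type*} [Group G] [MeasurableSpace G] [MeasurableMul₂ G] [MeasurableInv G]
variable {E : Type*} [MeasurableSpace E] [MulAction G E]

lemma smulM_apply (t : G) (μ : Measure G) {A : Set G} (hA : MeasurableSet A) :
    smulM t μ A = μ ((fun w => t * w) ⁻¹' A) :=
  Measure.map_apply (measurable_const_mul t) hA

lemma smulM_univ (t : G) (μ : Measure G) : smulM t μ Set.univ = μ Set.univ := by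
  rw [smulM_apply t μ MeasurableSet.univ, Set.preimage_univ]

lemma lintegral_smulM (t : G) (μ : Measure G) {h : G → ℝ≥0∞} (hh : Measurable h) :
    ∫⁻ v, h v ∂(smulM t μ) = ∫⁻ w, h (t * w) ∂μ := by
  unfold smulM
  exact lintegral_map hh (measurable_const_mul t)

lemma mact_mact (a b : G) (p : E × Measure G) : mact a (mact b p) = mact (a * b) p := by
  unfold mact smulM
  refine Prod.ext (by simp [smul_smul]) ?_
  simp only
  rw [Measure.map_map (measurable_const_mul a) (measurable_const_mul b)]
  congr 1
  funext s
  simp [mul_assoc]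

lemma measurable_smulM_trunc :
    Measurable fun q : G × Measure G => smulM q.1 (trunc q.2) := by
  apply Measure.measurable_of_measurable_coe
  intro A hA
  have : ∀ q : G × Measure G,
      smulM q.1 (trunc q.2) A = trunc q.2 (Prod.mk q.1 ⁻¹' {r : G × G | r.1 * r.2 ∈ A}) :=
    fun q => smulM_apply _ _ hA
  simp_rw [this]
  exact measurable_trunc_slice (measurable_mul hA)

lemma measurable_smulM_fixed (μ : Measure G) [SFinite μ] :
    Measurable fun w : G => smulM w μ := by
  apply Measure.measurable_of_measurable_coe
  intro A hA
  have : ∀ w : G, smulM w μ A = μ (Prod.mk w ⁻¹' {r : G × G | r.1 * r.2 ∈ A}) :=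
    fun w => smulM_apply _ _ hA
  simp_rw [this]
  exact measurable_measure_prodMk_left (measurable_mul hA)

lemma measurable_mact_trunc (hact : Measurable fun p : G × E => p.1 • p.2) :
    Measurable fun q : G × (E × Measure G) => mact q.1 (q.2.1, trunc q.2.2) := by
  unfold mact
  exact Measurable.prod
    (hact.comp (measurable_fst.prodMk (measurable_fst.comp measurable_snd)))
    (measurable_smulM_trunc.comp (measurable_fst.prodMk (measurable_snd.comp measurable_snd)))

lemma measurable_mact_fixed (hact : Measurable fun p : G × E => p.1 • p.2)
    (x : E) (μ : Measure G) [SFinite μ] :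
    Measurable fun w : G => mact w⁻¹ (x, μ) := by
  unfold mact
  exact Measurable.prod
    (hact.comp (measurable_inv.prodMk measurable_const))
    (((measurable_smulM_fixed μ).comp measurable_inv))

end Group

section FG

variable {G : Type*} [Group G] [MeasurableSpace G] [MeasurableMul₂ G] [MeasurableInv G]
variable {E : Type*} [MeasurableSpace E] [MulAction G E]

/-- The function `F` used in the proof: a measurable-in-`(x,μ)` version of the left-hand side
integrand. -/
def Ffun (lam : Measure G) (C : Set G) (g : (E × Measure G) × G → ℝ≥0∞)
    (p : E × Measure G) : ℝ≥0∞ :=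
  (lam C)⁻¹ * ∫⁻ u in C, (trunc p.2 ((fun w => u * w) ⁻¹' C))⁻¹ *
      ∫⁻ v, ((fun w => u * w) ⁻¹' C).indicator
        (fun v => g (mact v⁻¹ (p.1, trunc p.2), u * v)) v ∂(trunc p.2) ∂lam

/-- The function `G` used in the proof: the right-hand side integrand. -/
def Gfun (lam : Measure G) (C : Set G) (g : (E × Measure G) × G → ℝ≥0∞)
    (p : E × Measure G) : ℝ≥0∞ :=
  (lam C)⁻¹ * ∫⁻ u in C, g (p, u) ∂lam

lemma measurable_Gfun (lam : Measure G) [SFinite lam] (C : Set G)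
    {g : (E × Measure G) × G → ℝ≥0∞} (hg : Measurable g) :
    Measurable (Gfun lam C g) := by
  unfold Gfun
  exact (Measurable.lintegral_prod_right' hg).const_mul _

lemma measurable_Ffun (lam : Measure G) [SFinite lam] {C : Set G} (hC : MeasurableSet C)
    (hact : Measurable fun p : G × E => p.1 • p.2)
    {g : (E × Measure G) × G → ℝ≥0∞} (hg : Measurable g) :
    Measurable (Ffun lam C g) := by
  unfold Ffun
  have hS : MeasurableSet {r : ((E × Measure G) × G) × G | r.1.2 * r.2 ∈ C} :=
    ((measurable_snd.comp measurable_fst).mul measurable_snd) hC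
  have hgm : Measurable fun r : ((E × Measure G) × G) × G =>
      g (mact r.2⁻¹ (r.1.1.1, trunc r.1.1.2), r.1.2 * r.2) :=
    hg.comp ((((measurable_mact_trunc hact).comp
        ((measurable_snd.inv).prodMk (measurable_fst.comp measurable_fst)))).prodMk
      ((measurable_snd.comp measurable_fst).mul measurable_snd))
  have hind : Measurable fun r : ((E × Measure G) × G) × G =>
      ((fun w => r.1.2 * w) ⁻¹' C).indicator
        (fun v => g (mact v⁻¹ (r.1.1.1, trunc r.1.1.2), r.1.2 * v)) r.2 := by
    have heq : ∀ r : ((E × Measure G) × G) × G,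
        ((fun w => r.1.2 * w) ⁻¹' C).indicator
          (fun v => g (mact v⁻¹ (r.1.1.1, trunc r.1.1.2), r.1.2 * v)) r.2
        = {r' : ((E × Measure G) × G) × G | r'.1.2 * r'.2 ∈ C}.indicator
            (fun r' => g (mact r'.2⁻¹ (r'.1.1.1, trunc r'.1.1.2), r'.1.2 * r'.2)) r := by
      intro r
      by_cases hr : r.1.2 * r.2 ∈ C
      · rw [Set.indicator_of_mem (show r.2 ∈ (fun w => r.1.2 * w) ⁻¹' C from hr),
          Set.indicator_of_mem (show r ∈ _ from hr)]
      · rw [Set.indicator_of_notMem (show r.2 ∉ (fun w => r.1.2 * w) ⁻¹' C from hr),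
          Set.indicator_of_notMem (show r ∉ _ from hr)]
    simp_rw [heq]
    exact hgm.indicator hS
  have hinner : Measurable fun q : (E × Measure G) × G =>
      ∫⁻ v, ((fun w => q.2 * w) ⁻¹' C).indicator
        (fun v => g (mact v⁻¹ (q.1.1, trunc q.1.2), q.2 * v)) v ∂(trunc q.1.2) := by
    have h := measurable_trunc_lintegral (α := (E × Measure G) × G) (β := G) hind
    exact h.comp (measurable_id.prodMk (measurable_snd.comp measurable_fst))
  have hslice : Measurable fun q : (E × Measure G) × G =>
      trunc q.1.2 ((fun w => q.2 * w) ⁻¹' C) := by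
    have h := measurable_trunc_slice (α := G) (β := G) (s := {r : G × G | r.1 * r.2 ∈ C})
      (measurable_mul hC)
    exact h.comp (measurable_snd.prodMk (measurable_snd.comp measurable_fst))
  exact (Measurable.lintegral_prod_right'
    (f := fun q : (E × Measure G) × G =>
      (trunc q.1.2 ((fun w => q.2 * w) ⁻¹' C))⁻¹ *
      ∫⁻ v, ((fun w => q.2 * w) ⁻¹' C).indicator
        (fun v => g (mact v⁻¹ (q.1.1, trunc q.1.2), q.2 * v)) v ∂(trunc q.1.2))
    (hslice.inv.mul hinner)).const_mul _

lemma Ffun_apply_fin {lam : Measure G} {C : Set G} (hC : MeasurableSet C)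
    {g : (E × Measure G) × G → ℝ≥0∞} {p : E × Measure G} (hμ : p.2 Set.univ < ⊤) :
    Ffun lam C g p = (lam C)⁻¹ * ∫⁻ u in C, (p.2 ((fun w => u * w) ⁻¹' C))⁻¹ *
      ∫⁻ v in (fun w => u * w) ⁻¹' C, g (mact v⁻¹ p, u * v) ∂p.2 ∂lam := by
  unfold Ffun
  rw [trunc_eq_self hμ]
  simp only [Prod.mk.eta]
  congr 1
  refine lintegral_congr fun u => ?_
  congr 1
  exact lintegral_indicator ((measurable_const_mul u) hC) _

end FG

section Key

variable {G : Type*} [Group G] [MeasurableSpace G] [MeasurableMul₂ G] [MeasurableInv G]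
variable {E : Type*} [MeasurableSpace E] [MulAction G E]

lemma key (hact : Measurable fun p : G × E => p.1 • p.2)
    (lam : Measure G) [IsFiniteMeasure lam] [lam.IsMulRightInvariant]
    {C : Set G} (hC : MeasurableSet C) (hc0 : lam C ≠ 0)
    {g : (E × Measure G) × G → ℝ≥0∞} (hg : Measurable g)
    (x : E) (μ : Measure G) (hμ : μ Set.univ < ⊤) :
    ∫⁻ s, Ffun lam C g (mact s⁻¹ (x, μ)) ∂μ
      = ∫⁻ s, Gfun lam C g (mact s⁻¹ (x, μ)) ∂μ := by
  haveI : IsFiniteMeasure μ := ⟨hμ⟩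
  set D : G → Set G := fun t => (fun w => t * w) ⁻¹' C with hD
  have hDm : ∀ t, MeasurableSet (D t) := fun t => (measurable_const_mul t) hC
  have hSm : MeasurableSet {r : G × G | r.1 * r.2 ∈ C} := measurable_mul hC
  have hGC : (lam C)⁻¹ ≠ ⊤ := ENNReal.inv_ne_top.mpr hc0
  set K : G → ℝ≥0∞ := fun t => (μ (D t))⁻¹ *
      ∫⁻ w, (D t).indicator (fun w => g (mact w⁻¹ (x, μ), t * w)) w ∂μ with hK
  have hgm2 : Measurable fun r : G × G => g (mact r.2⁻¹ (x, μ), r.1 * r.2) :=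
    hg.comp (((measurable_mact_fixed hact x μ).comp measurable_snd).prodMk measurable_mul)
  have hindm : Measurable fun r : G × G =>
      (D r.1).indicator (fun w => g (mact w⁻¹ (x, μ), r.1 * w)) r.2 := by
    have heq : ∀ r : G × G, (D r.1).indicator (fun w => g (mact w⁻¹ (x, μ), r.1 * w)) r.2
        = {r' : G × G | r'.1 * r'.2 ∈ C}.indicator
            (fun r' => g (mact r'.2⁻¹ (x, μ), r'.1 * r'.2)) r := by
      intro r
      by_cases hr : r.1 * r.2 ∈ C
      · rw [Set.indicator_of_mem (show r.2 ∈ D r.1 from hr),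
          Set.indicator_of_mem (show r ∈ _ from hr)]
      · rw [Set.indicator_of_notMem (show r.2 ∉ D r.1 from hr),
          Set.indicator_of_notMem (show r ∉ _ from hr)]
    simp_rw [heq]
    exact hgm2.indicator hSm
  have hKm : Measurable K := by
    refine Measurable.mul (Measurable.inv ?_) ?_
    · exact measurable_measure_prodMk_left (ν := μ) hSm
    · exact Measurable.lintegral_prod_right'
        (f := fun r : G × G => (D r.1).indicator (fun w => g (mact w⁻¹ (x, μ), r.1 * w)) r.2) hindm
  -- Step A: pointwise identity for the inner value
  have stepA : ∀ s : G, Ffun lam C g (mact s⁻¹ (x, μ))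
      = (lam C)⁻¹ * ∫⁻ t, ((fun t' => t' * s) ⁻¹' C).indicator K t ∂lam := by
    intro s
    have hfin2 : (smulM s⁻¹ μ) Set.univ < ⊤ := by rw [smulM_univ]; exact hμ
    haveI : IsFiniteMeasure (smulM s⁻¹ μ) := ⟨hfin2⟩
    rw [show mact s⁻¹ (x, μ) = (s⁻¹ • x, smulM s⁻¹ μ) from rfl, Ffun_apply_fin hC hfin2]
    dsimp only
    congr 1
    have hΦ : ∀ u : G, (smulM s⁻¹ μ ((fun w => u * w) ⁻¹' C))⁻¹ *
        (∫⁻ v in (fun w => u * w) ⁻¹' C,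
          g (mact v⁻¹ (s⁻¹ • x, smulM s⁻¹ μ), u * v) ∂(smulM s⁻¹ μ)) = K (u * s⁻¹) := by
      intro u
      have e1 : smulM s⁻¹ μ ((fun w => u * w) ⁻¹' C) = μ (D (u * s⁻¹)) := by
        rw [smulM_apply _ _ (hDm u)]
        congr 1
        ext w
        simp [hD, mul_assoc]
      have hmeas : Measurable fun v =>
          ((fun w => u * w) ⁻¹' C).indicator
            (fun v => g (mact v⁻¹ (s⁻¹ • x, smulM s⁻¹ μ), u * v)) v :=
        (hg.comp ((measurable_mact_fixed hact (s⁻¹ • x) (smulM s⁻¹ μ)).prodMk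
          (measurable_const_mul u))).indicator (hDm u)
      have e2 : (∫⁻ v in (fun w => u * w) ⁻¹' C,
            g (mact v⁻¹ (s⁻¹ • x, smulM s⁻¹ μ), u * v) ∂(smulM s⁻¹ μ))
          = ∫⁻ w, (D (u * s⁻¹)).indicator
              (fun w => g (mact w⁻¹ (x, μ), (u * s⁻¹) * w)) w ∂μ := by
        rw [← lintegral_indicator (hDm u), lintegral_smulM s⁻¹ μ hmeas]
        refine lintegral_congr fun w => ?_
        by_cases hw : (u * s⁻¹) * w ∈ C
        · have hw' : s⁻¹ * w ∈ (fun w' => u * w') ⁻¹' C := by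
            simp only [Set.mem_preimage]
            rw [← mul_assoc]
            exact hw
          rw [Set.indicator_of_mem hw', Set.indicator_of_mem (show w ∈ D (u * s⁻¹) from hw)]
          have hm : mact (s⁻¹ * w)⁻¹ (s⁻¹ • x, smulM s⁻¹ μ) = mact w⁻¹ (x, μ) := by
            rw [show (s⁻¹ • x, smulM s⁻¹ μ) = mact s⁻¹ (x, μ) from rfl, mact_mact]
            congr 1
            simp [mul_inv_rev, mul_assoc]
          rw [hm, ← mul_assoc]
        · have hw' : s⁻¹ * w ∉ (fun w' => u * w') ⁻¹' C := by
            simp only [Set.mem_preimage]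
            rw [← mul_assoc]
            exact hw
          rw [Set.indicator_of_notMem hw',
            Set.indicator_of_notMem (show w ∉ D (u * s⁻¹) from hw)]
      rw [e1, e2]
    calc ∫⁻ u in C, (smulM s⁻¹ μ ((fun w => u * w) ⁻¹' C))⁻¹ *
          (∫⁻ v in (fun w => u * w) ⁻¹' C,
            g (mact v⁻¹ (s⁻¹ • x, smulM s⁻¹ μ), u * v) ∂(smulM s⁻¹ μ)) ∂lam
        = ∫⁻ u in C, K (u * s⁻¹) ∂lam := lintegral_congr fun u => hΦ u
      _ = ∫⁻ u, C.indicator (fun u' => K (u' * s⁻¹)) u ∂lam :=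
          (lintegral_indicator hC _).symm
      _ = ∫⁻ t, C.indicator (fun u' => K (u' * s⁻¹)) (t * s) ∂lam :=
          (lintegral_mul_right_eq_self (fun u => C.indicator (fun u' => K (u' * s⁻¹)) u) s).symm
      _ = ∫⁻ t, ((fun t' => t' * s) ⁻¹' C).indicator K t ∂lam := by
          refine lintegral_congr fun t => ?_
          by_cases ht : t * s ∈ C
          · rw [Set.indicator_of_mem ht,
              Set.indicator_of_mem (show t ∈ (fun t' => t' * s) ⁻¹' C from ht)]
            rw [mul_inv_cancel_right]
          · rw [Set.indicator_of_notMem ht,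
              Set.indicator_of_notMem (show t ∉ (fun t' => t' * s) ⁻¹' C from ht)]
  have hswap1 : Measurable fun q : G × G => ((fun t' => t' * q.1) ⁻¹' C).indicator K q.2 := by
    have heq : ∀ q : G × G, ((fun t' => t' * q.1) ⁻¹' C).indicator K q.2
        = {r : G × G | r.2 * r.1 ∈ C}.indicator (fun r => K r.2) q := by
      intro q
      by_cases h : q.2 * q.1 ∈ C
      · rw [Set.indicator_of_mem (show q.2 ∈ (fun t' => t' * q.1) ⁻¹' C from h),
          Set.indicator_of_mem (show q ∈ _ from h)]
      · rw [Set.indicator_of_notMem (show q.2 ∉ (fun t' => t' * q.1) ⁻¹' C from h),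
          Set.indicator_of_notMem (show q ∉ _ from h)]
    simp_rw [heq]
    exact (hKm.comp measurable_snd).indicator ((measurable_snd.mul measurable_fst) hC)
  calc ∫⁻ s, Ffun lam C g (mact s⁻¹ (x, μ)) ∂μ
      = ∫⁻ s, (lam C)⁻¹ * ∫⁻ t, ((fun t' => t' * s) ⁻¹' C).indicator K t ∂lam ∂μ :=
        lintegral_congr fun s => stepA s
    _ = (lam C)⁻¹ * ∫⁻ s, ∫⁻ t, ((fun t' => t' * s) ⁻¹' C).indicator K t ∂lam ∂μ :=
        lintegral_const_mul' _ _ hGC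
    _ = (lam C)⁻¹ * ∫⁻ t, ∫⁻ s, ((fun t' => t' * s) ⁻¹' C).indicator K t ∂μ ∂lam := by
        congr 1
        exact lintegral_lintegral_swap hswap1.aemeasurable
    _ = (lam C)⁻¹ * ∫⁻ t, K t * μ (D t) ∂lam := by
        congr 1
        refine lintegral_congr fun t => ?_
        have heq : ∀ s : G, ((fun t' => t' * s) ⁻¹' C).indicator K t
            = (D t).indicator (fun _ => K t) s := by
          intro s
          by_cases h : t * s ∈ C
          · rw [Set.indicator_of_mem (show t ∈ (fun t' => t' * s) ⁻¹' C from h),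
              Set.indicator_of_mem (show s ∈ D t from h)]
          · rw [Set.indicator_of_notMem (show t ∉ (fun t' => t' * s) ⁻¹' C from h),
              Set.indicator_of_notMem (show s ∉ D t from h)]
        simp_rw [heq]
        rw [lintegral_indicator_const (hDm t)]
    _ = (lam C)⁻¹ * ∫⁻ t, ∫⁻ w, (D t).indicator
          (fun w => g (mact w⁻¹ (x, μ), t * w)) w ∂μ ∂lam := by
        congr 1
        refine lintegral_congr fun t => ?_
        by_cases h0 : μ (D t) = 0
        · rw [h0, mul_zero, lintegral_indicator (hDm t)]
          exact (setLIntegral_measure_zero _ _ h0).symm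
        · rw [hK]
          dsimp only
          rw [mul_comm ((μ (D t))⁻¹) _, mul_assoc,
            ENNReal.inv_mul_cancel h0 (measure_ne_top μ _), mul_one]
    _ = (lam C)⁻¹ * ∫⁻ w, ∫⁻ t, (D t).indicator
          (fun w' => g (mact w'⁻¹ (x, μ), t * w')) w ∂lam ∂μ := by
        congr 1
        exact lintegral_lintegral_swap hindm.aemeasurable
    _ = (lam C)⁻¹ * ∫⁻ w, ∫⁻ r in C, g (mact w⁻¹ (x, μ), r) ∂lam ∂μ := by
        congr 1
        refine lintegral_congr fun w => ?_
        calc ∫⁻ t, (D t).indicator (fun w' => g (mact w'⁻¹ (x, μ), t * w')) w ∂lam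
            = ∫⁻ t, C.indicator (fun r => g (mact w⁻¹ (x, μ), r)) (t * w) ∂lam := by
              refine lintegral_congr fun t => ?_
              by_cases h : t * w ∈ C
              · rw [Set.indicator_of_mem (show w ∈ D t from h), Set.indicator_of_mem h]
              · rw [Set.indicator_of_notMem (show w ∉ D t from h),
                  Set.indicator_of_notMem h]
          _ = ∫⁻ r, C.indicator (fun r => g (mact w⁻¹ (x, μ), r)) r ∂lam :=
              lintegral_mul_right_eq_self _ w
          _ = ∫⁻ r in C, g (mact w⁻¹ (x, μ), r) ∂lam := lintegral_indicator hC _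
    _ = ∫⁻ w, (lam C)⁻¹ * ∫⁻ r in C, g (mact w⁻¹ (x, μ), r) ∂lam ∂μ :=
        (lintegral_const_mul' _ _ hGC).symm
    _ = ∫⁻ w, Gfun lam C g (mact w⁻¹ (x, μ)) ∂μ := rfl

end Key

/-- On a compact group, a Haar measure is also right invariant. -/
lemma isMulRightInvariant_of_compact {G : Type*} [Group G] [TopologicalSpace G]
    [IsTopologicalGroup G] [CompactSpace G] [MeasurableSpace G] [BorelSpace G]
    (lam : Measure G) [lam.IsHaarMeasure] : lam.IsMulRightInvariant := by
  constructor
  intro s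
  haveI : IsFiniteMeasure lam := CompactSpace.isFiniteMeasure
  haveI : IsFiniteMeasure (Measure.map (· * s) lam) := Measure.isFiniteMeasure_map lam _
  have h1 := Measure.isMulInvariant_eq_smul_of_compactSpace (Measure.map (· * s) lam) lam
  have h2 : Measure.map (· * s) lam Set.univ = lam Set.univ := by
    rw [Measure.map_apply (measurable_mul_const s) MeasurableSet.univ, Set.preimage_univ]
  have h0 : lam Set.univ ≠ 0 := isOpen_univ.measure_ne_zero lam ⟨1, trivial⟩
  have htop : lam Set.univ ≠ ⊤ := measure_ne_top lam _
  set c := Measure.haarScalarFactor (Measure.map (· * s) lam) lam with hc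
  have h3 := congrArg (fun m : Measure G => m Set.univ) h1
  simp only [Measure.smul_apply, ENNReal.smul_def, smul_eq_mul] at h3
  rw [h2] at h3
  have hc1 : (c : ℝ≥0∞) = 1 := by
    calc (c : ℝ≥0∞) = (c : ℝ≥0∞) * (lam Set.univ * (lam Set.univ)⁻¹) := by
          rw [ENNReal.mul_inv_cancel h0 htop, mul_one]
      _ = ((c : ℝ≥0∞) * lam Set.univ) * (lam Set.univ)⁻¹ := by rw [mul_assoc]
      _ = lam Set.univ * (lam Set.univ)⁻¹ := by rw [← h3]
      _ = 1 := ENNReal.mul_inv_cancel h0 htop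
  have hcc : c = 1 := by exact_mod_cast hc1
  rw [h1, hcc, one_smul]

end Stmt2Aux

/-- (`G` compact.)  If the origin is a typical location for `X` in the mass
of `ξ`, then for any `C ∈ 𝒢` with `λ(C) > 0` such that a.s. `ξ(u⁻¹C) > 0` for λ-a.e. `u ∈ C`,
the pair `(V_C⁻¹·(X,ξ), U_C V_C)` has the same distribution as `((X,ξ), U_C)`, expressed by
the transport identity below (property (2.1) of the paper). -/
theorem stmt2
    {G : Type*} [Group G] [TopologicalSpace G] [IsTopologicalGroup G] [CompactSpace G]
    [SecondCountableTopology G] [T2Space G] [MeasurableSpace G] [BorelSpace G]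
    (lam : Measure G) [lam.IsHaarMeasure]
    {E : Type*} [MeasurableSpace E] [MulAction G E]
    (hact : Measurable fun p : G × E => p.1 • p.2)
    {Ω : Type*} [MeasurableSpace Ω] (P : Measure Ω) [IsProbabilityMeasure P]
    (X : Ω → E) (ξ : Ω → Measure G) (hX : Measurable X) (hξ : Measurable ξ)
    (hpos : ∀ᵐ ω ∂P, 0 < ξ ω Set.univ ∧ ξ ω Set.univ < ⊤)
    -- the origin is a typical location for `X` in the mass of `ξ`
    (htyp : ∀ f : E × Measure G → ℝ≥0∞, Measurable f →
      ∫⁻ ω, (ξ ω Set.univ)⁻¹ * ∫⁻ s, f (mact s⁻¹ (X ω, ξ ω)) ∂(ξ ω) ∂P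
        = ∫⁻ ω, f (X ω, ξ ω) ∂P)
    (C : Set G) (hC : MeasurableSet C) (hCpos : 0 < lam C)
    (hCξ : ∀ᵐ ω ∂P, ∀ᵐ u ∂(lam.restrict C), 0 < ξ ω ((fun w => u * w) ⁻¹' C)) :
    ∀ g : (E × Measure G) × G → ℝ≥0∞, Measurable g →
      ∫⁻ ω, (lam C)⁻¹ *
          ∫⁻ u in C, (ξ ω ((fun w => u * w) ⁻¹' C))⁻¹ *
            ∫⁻ v in (fun w => u * w) ⁻¹' C, g (mact v⁻¹ (X ω, ξ ω), u * v) ∂(ξ ω) ∂lam ∂P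
        = ∫⁻ ω, (lam C)⁻¹ * ∫⁻ u in C, g ((X ω, ξ ω), u) ∂lam ∂P := by
  intro g hg
  haveI : IsFiniteMeasure lam := CompactSpace.isFiniteMeasure
  haveI : lam.IsMulRightInvariant := Stmt2Aux.isMulRightInvariant_of_compact lam
  have hc0 : lam C ≠ 0 := hCpos.ne'
  have hF : Measurable (Stmt2Aux.Ffun lam C g) := Stmt2Aux.measurable_Ffun lam hC hact hg
  have hGf : Measurable (Stmt2Aux.Gfun lam C g) := Stmt2Aux.measurable_Gfun lam C hg
  have step1 : ∫⁻ ω, (lam C)⁻¹ *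
        ∫⁻ u in C, (ξ ω ((fun w => u * w) ⁻¹' C))⁻¹ *
          ∫⁻ v in (fun w => u * w) ⁻¹' C, g (mact v⁻¹ (X ω, ξ ω), u * v) ∂(ξ ω) ∂lam ∂P
      = ∫⁻ ω, Stmt2Aux.Ffun lam C g (X ω, ξ ω) ∂P := by
    refine lintegral_congr_ae ?_
    filter_upwards [hpos] with ω hω
    rw [Stmt2Aux.Ffun_apply_fin hC (p := (X ω, ξ ω)) hω.2]
  have step3 : ∫⁻ ω, (ξ ω Set.univ)⁻¹ *
        ∫⁻ s, Stmt2Aux.Ffun lam C g (mact s⁻¹ (X ω, ξ ω)) ∂(ξ ω) ∂P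
      = ∫⁻ ω, (ξ ω Set.univ)⁻¹ *
        ∫⁻ s, Stmt2Aux.Gfun lam C g (mact s⁻¹ (X ω, ξ ω)) ∂(ξ ω) ∂P := by
    refine lintegral_congr_ae ?_
    filter_upwards [hpos] with ω hω
    rw [Stmt2Aux.key hact lam hC hc0 hg (X ω) (ξ ω) hω.2]
  calc ∫⁻ ω, (lam C)⁻¹ *
        ∫⁻ u in C, (ξ ω ((fun w => u * w) ⁻¹' C))⁻¹ *
          ∫⁻ v in (fun w => u * w) ⁻¹' C, g (mact v⁻¹ (X ω, ξ ω), u * v) ∂(ξ ω) ∂lam ∂P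
      = ∫⁻ ω, Stmt2Aux.Ffun lam C g (X ω, ξ ω) ∂P := step1
    _ = ∫⁻ ω, (ξ ω Set.univ)⁻¹ *
          ∫⁻ s, Stmt2Aux.Ffun lam C g (mact s⁻¹ (X ω, ξ ω)) ∂(ξ ω) ∂P :=
        (htyp _ hF).symm
    _ = ∫⁻ ω, (ξ ω Set.univ)⁻¹ *
          ∫⁻ s, Stmt2Aux.Gfun lam C g (mact s⁻¹ (X ω, ξ ω)) ∂(ξ ω) ∂P := step3
    _ = ∫⁻ ω, Stmt2Aux.Gfun lam C g (X ω, ξ ω) ∂P := htyp _ hGf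
    _ = ∫⁻ ω, (lam C)⁻¹ * ∫⁻ u in C, g ((X ω, ξ ω), u) ∂lam ∂P := rfl
end
end

section
/- Let G be a compact second countable Hausdorff topological group with Haar measure λ, acting measurably on (E, ℰ), and let X be a random element of E and ξ a random measure on G with 0 < ξ(G) < ∞ almost surely. Suppose that for every measurable g : (E × M(G)) × G → [0,∞]: E[ λ(G)⁻¹ ∫_G ξ(G)⁻¹ ∫_G g(v⁻¹·(X,ξ), uv) ξ(dv) λ(du) ] = E[ λ(G)⁻¹ ∫_G g((X,ξ), u) λ(du) ] (this is property (2.1) of the paper for the set C = G). Then the origin is a typical location for X in the mass of ξ, i.e. E[ξ(G)⁻¹ ∫ f(s⁻¹·(X,ξ)) ξ(ds)] = E[f(X,ξ)] for every measurable f : E × M(G) → [0,∞]. -/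
open MeasureTheory
open scoped ENNReal

noncomputable section

/-- (`G` compact.)  If property (2.1) of the paper holds for the set `C = G`,
then the origin is a typical location for `X` in the mass of `ξ`. -/
theorem stmt3
    {G : Type*} [Group G] [TopologicalSpace G] [IsTopologicalGroup G] [CompactSpace G]
    [SecondCountableTopology G] [T2Space G] [MeasurableSpace G] [BorelSpace G]
    (lam : Measure G) [lam.IsHaarMeasure]
    {E : Type*} [MeasurableSpace E] [MulAction G E]
    (hact : Measurable fun p : G × E => p.1 • p.2)
    {Ω : Type*} [MeasurableSpace Ω] (P : Measure Ω) [IsProbabilityMeasure P]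
    (X : Ω → E) (ξ : Ω → Measure G) (hX : Measurable X) (hξ : Measurable ξ)
    (hpos : ∀ᵐ ω ∂P, 0 < ξ ω Set.univ ∧ ξ ω Set.univ < ⊤)
    -- property (2.1) of the paper for `C = G`
    (h21 : ∀ g : (E × Measure G) × G → ℝ≥0∞, Measurable g →
      ∫⁻ ω, (lam Set.univ)⁻¹ *
          ∫⁻ u, (ξ ω Set.univ)⁻¹ * ∫⁻ v, g (mact v⁻¹ (X ω, ξ ω), u * v) ∂(ξ ω) ∂lam ∂P
        = ∫⁻ ω, (lam Set.univ)⁻¹ * ∫⁻ u, g ((X ω, ξ ω), u) ∂lam ∂P) :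
    ∀ f : E × Measure G → ℝ≥0∞, Measurable f →
      ∫⁻ ω, (ξ ω Set.univ)⁻¹ * ∫⁻ s, f (mact s⁻¹ (X ω, ξ ω)) ∂(ξ ω) ∂P
        = ∫⁻ ω, f (X ω, ξ ω) ∂P := by
  intro f hf
  have hc0 : lam Set.univ ≠ 0 := (isOpen_univ.measure_pos lam Set.univ_nonempty).ne'
  have hcT : lam Set.univ ≠ ⊤ := measure_ne_top lam _
  have key : ∀ a : ℝ≥0∞, (lam Set.univ)⁻¹ * (a * lam Set.univ) = a := by
    intro a
    rw [mul_comm a, ← mul_assoc, ENNReal.inv_mul_cancel hc0 hcT, one_mul]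
  have h := h21 (fun p => f p.1) (hf.comp measurable_fst)
  simp only [lintegral_const, key] at h
  exact h
end
end

section
/- Let d ≥ 1 and γ > 0, and let Π be the distribution of a stationary Poisson process on ℝ^d with intensity measure γ times Lebesgue measure: a probability measure on M(ℝ^d) concentrated on simple point measures such that for every finite family of pairwise disjoint bounded Borel sets A₁,…,Aₙ, the coordinates ν ↦ ν(A₁),…,ν(Aₙ) are independent Poisson random variables with means γ·Leb(A₁),…,γ·Leb(Aₙ). Then with positive probability the process has no point that is closer to the origin than to every other point of the process: Π({ν : there is no t ∈ supp ν such that |t| < |t − s| for all s ∈ supp ν with s ≠ t}) > 0. -/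
open MeasureTheory
open scoped ENNReal NNReal

noncomputable section

/-- The support of a measure: the set of points all of whose open neighbourhoods have
positive measure. -/
def msupp {V : Type*} [TopologicalSpace V] [MeasurableSpace V] (μ : Measure V) : Set V :=
  {t | ∀ U : Set V, IsOpen U → t ∈ U → 0 < μ U}

/-- A simple point measure: a locally finite integer-valued measure with all atoms of size
at most one. -/
def IsSimplePointMeasure {V : Type*} [TopologicalSpace V] [MeasurableSpace V]
    (μ : Measure V) : Prop :=
  IsLocallyFiniteMeasure μ ∧ (∀ A : Set V, MeasurableSet A → μ A = ⊤ ∨ ∃ n : ℕ, μ A = n) ∧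
    ∀ t : V, μ {t} ≤ 1

open Metric Set

lemma msupp_compl_null {V : Type*} [TopologicalSpace V] [MeasurableSpace V]
    [SecondCountableTopology V] (ν : Measure V) : ν (msupp ν)ᶜ = 0 := by
  obtain ⟨b, hbc, -, hb⟩ := TopologicalSpace.exists_countable_basis V
  have h1 : (msupp ν)ᶜ ⊆ ⋃ U ∈ {U ∈ b | ν U = 0}, U := by
    intro x hx
    simp only [msupp, mem_compl_iff, mem_setOf_eq, not_forall] at hx
    obtain ⟨U, hU, hxU, hν⟩ := hx
    have hν0 : ν U = 0 := by simpa using hν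
    obtain ⟨v, hvb, hxv, hvU⟩ := hb.exists_subset_of_mem_open hxU hU
    exact mem_biUnion ⟨hvb, measure_mono_null hvU hν0⟩ hxv
  refine measure_mono_null h1 ?_
  rw [measure_biUnion_null_iff (hbc.mono (sep_subset _ _))]
  exact fun U hU => hU.2

lemma exists_msupp_mem {V : Type*} [TopologicalSpace V] [MeasurableSpace V]
    [SecondCountableTopology V] {ν : Measure V} {U : Set V}
    (hU : ν U ≠ 0) : ∃ s ∈ msupp ν, s ∈ U := by
  by_contra h
  push_neg at h
  exact hU (measure_mono_null (fun x hx => by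
    intro hm
    exact h x hm hx) (msupp_compl_null ν))

lemma measure_le_of_msupp_subset {V : Type*} [TopologicalSpace V] [MeasurableSpace V]
    [SecondCountableTopology V] {ν : Measure V} {A : Set V} {t : V}
    (h : msupp ν ∩ A ⊆ {t}) : ν A ≤ ν {t} := by
  calc ν A ≤ ν ((msupp ν ∩ A) ∪ (msupp ν)ᶜ) := by
        refine measure_mono fun x hx => ?_
        by_cases hm : x ∈ msupp ν
        · exact Or.inl ⟨hm, hx⟩
        · exact Or.inr hm
    _ ≤ ν (msupp ν ∩ A) + ν (msupp ν)ᶜ := measure_union_le _ _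
    _ = ν (msupp ν ∩ A) := by rw [msupp_compl_null]; simp
    _ ≤ ν {t} := measure_mono h

lemma one_le_msupp_atom {X : Type*} [MetricSpace X] [MeasurableSpace X] [OpensMeasurableSpace X]
    {ν : Measure X} (hs : IsSimplePointMeasure ν) {t : X} (ht : t ∈ msupp ν) : 1 ≤ ν {t} := by
  obtain ⟨hlf, hint, -⟩ := hs
  obtain ⟨s, hs_mem, hsfin⟩ := hlf.finiteAtNhds t
  obtain ⟨ε, hε, hball⟩ := Metric.mem_nhds_iff.mp hs_mem
  set f : ℕ → Set X := fun n => ball t (ε / 2 ^ n) with hf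
  have hsub : ∀ n, f n ⊆ ball t ε := fun n =>
    ball_subset_ball (by
      rw [div_le_iff₀ (by positivity)]
      nlinarith [one_le_pow₀ (a := (2:ℝ)) (n := n) (by norm_num), hε])
  have hlt : ∀ n, ν (f n) < ⊤ := fun n =>
    lt_of_le_of_lt (measure_mono ((hsub n).trans hball)) hsfin.lt_top
  have hmeas : ∀ n, NullMeasurableSet (f n) ν := fun n => measurableSet_ball.nullMeasurableSet
  have hanti : Antitone f := fun a b hab =>
    ball_subset_ball (div_le_div_of_nonneg_left (le_of_lt hε) (by positivity)
      (by exact pow_le_pow_right₀ (by norm_num) hab))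
  have hiInter : ⋂ n, f n = {t} := by
    apply Subset.antisymm
    · intro x hx
      simp only [mem_iInter, hf, mem_ball] at hx
      have : dist x t ≤ 0 := by
        by_contra hc
        push_neg at hc
        obtain ⟨n, hn⟩ := pow_unbounded_of_one_lt (ε / dist x t) (by norm_num : (1:ℝ) < 2)
        have := hx n
        rw [div_lt_iff₀ hc] at hn
        rw [lt_div_iff₀ (by positivity)] at this
        linarith
      exact eq_of_dist_eq_zero (le_antisymm this dist_nonneg)
    · intro x hx
      simp only [mem_singleton_iff] at hx
      subst hx
      exact mem_iInter.mpr fun n => mem_ball_self (by positivity)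
  have htend := MeasureTheory.tendsto_measure_iInter_atTop hmeas hanti ⟨0, (hlt 0).ne⟩
  rw [hiInter] at htend
  refine ge_of_tendsto htend (Filter.Eventually.of_forall fun n => ?_)
  have hpos : 0 < ν (f n) := ht _ isOpen_ball (mem_ball_self (by positivity))
  show 1 ≤ ν (f n)
  rcases hint (f n) measurableSet_ball with h | ⟨k, hk⟩
  · exact absurd h (hlt n).ne
  · rw [hk] at hpos ⊢
    have hk1 : 1 ≤ k := by
      rcases Nat.eq_zero_or_pos k with rfl | h
      · simp at hpos
      · exact h
    exact_mod_cast hk1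

lemma exists_dyadic {x : ℝ} (hx : 1 ≤ x) : ∃ n : ℕ, 2 ^ n ≤ x ∧ x < 2 ^ (n + 1) := by
  have hm1 : 1 ≤ ⌊x⌋₊ := Nat.le_floor (by exact_mod_cast hx)
  refine ⟨Nat.log 2 ⌊x⌋₊, ?_, ?_⟩
  · have h1 : (2:ℝ) ^ Nat.log 2 ⌊x⌋₊ ≤ (⌊x⌋₊ : ℝ) := by
      exact_mod_cast Nat.pow_log_le_self 2 (by omega)
    have h2 : (⌊x⌋₊ : ℝ) ≤ x := Nat.floor_le (by linarith)
    linarith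
  · have h2 : ⌊x⌋₊ < 2 ^ (Nat.log 2 ⌊x⌋₊ + 1) := Nat.lt_pow_succ_log_self (by norm_num) _
    have h3 : x < ⌊x⌋₊ + 1 := Nat.lt_floor_add_one x
    have h4 : (⌊x⌋₊ : ℝ) + 1 ≤ 2 ^ (Nat.log 2 ⌊x⌋₊ + 1) := by exact_mod_cast h2
    linarith

lemma good_of_config {d : ℕ} {L : ℝ} (hL : 2 ≤ L)
    {m : ℕ} (cell : ℕ → Set (EuclideanSpace ℝ (Fin d)))
    (hcell_cov : ∀ t : EuclideanSpace ℝ (Fin d), 1 ≤ ‖t‖ → ‖t‖ < L → ∃ i, i < m ∧ t ∈ cell i)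
    (hcell_diam : ∀ n, ∀ x ∈ cell n, ∀ y ∈ cell n, dist x y < 1)
    (Ys : Set (EuclideanSpace ℝ (Fin d)))
    (hYcov : {x : EuclideanSpace ℝ (Fin d) | 5/4 ≤ ‖x‖ ∧ ‖x‖ ≤ 5/2} ⊆ ⋃ y ∈ Ys, ball y (1/20))
    (ν : Measure (EuclideanSpace ℝ (Fin d)))
    (hsimp : IsSimplePointMeasure ν)
    (hb0 : ν (ball 0 1) = 0)
    (hcells : ∀ i : Fin m, ∃ k : ℕ, k ≠ 1 ∧ ν (cell i.1) = k)
    (hout : ∀ n : ℕ, ∀ y ∈ Ys, ν (ball ((2 ^ n * L) • y) (3 * (2 ^ n * L) / 20)) ≠ 0) :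
    ¬ ∃ t ∈ msupp ν, ∀ s ∈ msupp ν, s ≠ t → ‖t‖ < ‖t - s‖ := by
  rintro ⟨t, htm, ht⟩
  have hLpos : (0:ℝ) < L := by linarith
  rcases lt_or_ge ‖t‖ 1 with h1 | h1
  · have := htm (ball 0 1) isOpen_ball (by simpa [mem_ball_zero_iff] using h1)
    rw [hb0] at this
    exact lt_irrefl 0 this
  rcases lt_or_ge ‖t‖ L with h2 | h2
  · -- cell case
    obtain ⟨i, him, hti⟩ := hcell_cov t h1 h2
    obtain ⟨k, hk1, hνk⟩ := hcells ⟨i, him⟩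
    have hatom := one_le_msupp_atom hsimp htm
    have hk2 : 2 ≤ k := by
      have h1k : (1:ℝ≥0∞) ≤ (k:ℝ≥0∞) := by
        refine le_trans hatom (le_trans (measure_mono (singleton_subset_iff.mpr hti)) ?_)
        exact le_of_eq hνk
      have : 1 ≤ k := by exact_mod_cast h1k
      omega
    have hex : ∃ s, (s ∈ msupp ν ∧ s ∈ cell i) ∧ s ≠ t := by
      by_contra hc
      push_neg at hc
      have hsub : msupp ν ∩ cell i ⊆ {t} := by
        intro s hs
        simp only [mem_singleton_iff]
        by_contra hst
        exact hst (hc s ⟨hs.1, hs.2⟩)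
      have hle := measure_le_of_msupp_subset hsub
      rw [hνk] at hle
      have hle1 : (k:ℝ≥0∞) ≤ 1 := le_trans hle (hsimp.2.2 t)
      have : k ≤ 1 := by exact_mod_cast hle1
      omega
    obtain ⟨s, ⟨hsm, hsc⟩, hst⟩ := hex
    have hdist : ‖t - s‖ < 1 := by
      rw [← dist_eq_norm]
      exact hcell_diam i t hti s hsc
    have := ht s hsm hst
    linarith
  · -- far case
    have hR : 1 ≤ ‖t‖ / L := (one_le_div hLpos).mpr h2
    obtain ⟨n, hn1, hn2⟩ := exists_dyadic hR
    set Q : ℝ := 2 ^ n * L with hQdef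
    have hQpos : 0 < Q := by positivity
    have hQ1 : Q ≤ ‖t‖ := by
      rw [le_div_iff₀ hLpos] at hn1
      linarith [hn1]
    have hQ2 : ‖t‖ < 2 * Q := by
      rw [div_lt_iff₀ hLpos] at hn2
      calc ‖t‖ < 2 ^ (n + 1) * L := hn2
        _ = 2 * Q := by rw [hQdef]; ring
    set z := (5/4 : ℝ) • t with hzdef
    have hznorm : ‖z‖ = 5/4 * ‖t‖ := by
      rw [hzdef, norm_smul, Real.norm_eq_abs, abs_of_pos (by norm_num : (0:ℝ) < 5/4)]
    have hzK : Q⁻¹ • z ∈ {x : EuclideanSpace ℝ (Fin d) | 5/4 ≤ ‖x‖ ∧ ‖x‖ ≤ 5/2} := by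
      have hnq : ‖Q⁻¹ • z‖ = 5/4 * ‖t‖ / Q := by
        rw [norm_smul, Real.norm_eq_abs, abs_of_pos (by positivity : (0:ℝ) < Q⁻¹), hznorm]
        ring
      simp only [mem_setOf_eq, hnq]
      constructor
      · rw [le_div_iff₀ hQpos]
        linarith
      · rw [div_le_iff₀ hQpos]
        linarith
    obtain ⟨y, hy, hyz⟩ := mem_iUnion₂.mp (hYcov hzK)
    have hsubB : ball (Q • y) (3 * Q / 20) ⊆ ball z (Q / 5) := by
      intro w hw
      rw [mem_ball] at hw ⊢
      have hyz' : dist (Q • y) z < Q / 20 := by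
        have : Q • y - z = Q • (y - Q⁻¹ • z) := by
          rw [smul_sub, smul_inv_smul₀ hQpos.ne']
        rw [dist_eq_norm, this, norm_smul, Real.norm_eq_abs, abs_of_pos hQpos]
        have hd : ‖y - Q⁻¹ • z‖ < 1/20 := by
          rw [← dist_eq_norm, dist_comm, ← mem_ball]
          exact hyz
        nlinarith
      calc dist w z ≤ dist w (Q • y) + dist (Q • y) z := dist_triangle _ _ _
        _ < 3 * Q / 20 + Q / 20 := by linarith
        _ = Q / 5 := by ring
    have hνz : ν (ball z (Q / 5)) ≠ 0 := by
      intro h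
      exact hout n y hy (measure_mono_null hsubB h)
    obtain ⟨s, hsm, hsz⟩ := exists_msupp_mem hνz
    have htz : dist t z = 1/4 * ‖t‖ := by
      have h4 : t - z = (-(1/4) : ℝ) • t := by rw [hzdef]; module
      have h5 : |(-(1/4) : ℝ)| = 1/4 := by norm_num
      rw [dist_eq_norm, h4, norm_smul, Real.norm_eq_abs, h5]
    rw [mem_ball] at hsz
    have hst : s ≠ t := by
      intro h
      rw [h] at hsz
      rw [htz] at hsz
      nlinarith
    have hts : ‖t - s‖ < ‖t‖ := by
      rw [← dist_eq_norm]
      calc dist t s ≤ dist t z + dist z s := dist_triangle _ _ _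
        _ = dist t z + dist s z := by rw [dist_comm z s]
        _ < 1/4 * ‖t‖ + Q / 5 := by rw [htz]; linarith
        _ ≤ 1/4 * ‖t‖ + ‖t‖ / 5 := by linarith
        _ < ‖t‖ := by nlinarith
    have := ht s hsm hst
    linarith

set_option maxHeartbeats 2000000

/-- A stationary Poisson process on `ℝ^d` with intensity `γ · Leb` has,
with positive probability, no point that is closer to the origin than to every other point
of the process. -/
theorem stmt17 (d : ℕ) (hd : 1 ≤ d) (γ : ℝ≥0) (hγ : 0 < γ)
    (P : Measure (Measure (EuclideanSpace ℝ (Fin d)))) [IsProbabilityMeasure P]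
    -- `P` is concentrated on simple point measures
    (hsimple : ∀ᵐ ν ∂P, IsSimplePointMeasure ν)
    -- `P` is a Poisson process with intensity measure `γ · Leb`
    (hPoisson : ∀ (n : ℕ) (A : Fin n → Set (EuclideanSpace ℝ (Fin d))),
      (∀ i, MeasurableSet (A i)) → (∀ i, Bornology.IsBounded (A i)) →
      Pairwise (Function.onFun Disjoint A) →
      ∀ k : Fin n → ℕ,
        P {ν : Measure (EuclideanSpace ℝ (Fin d)) | ∀ i, ν (A i) = k i}
          = ∏ i : Fin n,
              ENNReal.ofReal (Real.exp (-(((γ : ℝ≥0∞) • volume) (A i)).toReal))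
                * (((γ : ℝ≥0∞) • volume) (A i)) ^ (k i) / (Nat.factorial (k i) : ℝ≥0∞)) :
    0 < P {ν : Measure (EuclideanSpace ℝ (Fin d)) |
        ¬ ∃ t ∈ msupp ν, ∀ s ∈ msupp ν, s ≠ t → ‖t‖ < ‖t - s‖} := by
  classical
  haveI hNE : Nonempty (Fin d) := ⟨⟨0, hd⟩⟩
  haveI hNT : Nontrivial (EuclideanSpace ℝ (Fin d)) := inferInstance
  have hg : (0:ℝ) < (γ:ℝ) := hγ
  set V : ℝ := (volume (ball (0 : EuclideanSpace ℝ (Fin d)) 1)).toReal with hVdef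
  have hVpos : 0 < V :=
    ENNReal.toReal_pos (measure_ball_pos volume 0 one_pos).ne' measure_ball_lt_top.ne
  -- the net on the shell
  obtain ⟨Ys, hYsubK, hYfin, hYcov⟩ :=
    ((isCompact_closedBall (0 : EuclideanSpace ℝ (Fin d)) (5/2)).of_isClosed_subset
      (show IsClosed {x : EuclideanSpace ℝ (Fin d) | 5/4 ≤ ‖x‖ ∧ ‖x‖ ≤ 5/2} from
        isClosed_Icc.preimage continuous_norm)
      (fun x hx => mem_closedBall_zero_iff.mpr hx.2)).elim_finite_subcover_image
      (b := {x : EuclideanSpace ℝ (Fin d) | 5/4 ≤ ‖x‖ ∧ ‖x‖ ≤ 5/2})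
      (c := fun y => ball y (1/20))
      (fun y _ => isOpen_ball)
      (fun x hx => mem_biUnion hx (mem_ball_self (by norm_num)))
  haveI hYfty : Fintype ↥Ys := hYfin.fintype
  set N : ℕ := Fintype.card ↥Ys with hNdef
  -- the choice of L
  set β : ℝ := Real.log (2 * ((N:ℝ) + 1)) with hβdef
  set B : ℝ := max 1 (β / ((γ:ℝ) * V)) with hBdef
  set L : ℝ := max 2 ((20/3) * B) with hLdef
  have hL2 : (2:ℝ) ≤ L := le_max_left _ _
  have hLpos : (0:ℝ) < L := by linarith
  have hB1 : (1:ℝ) ≤ B := le_max_left _ _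
  have h3L : B ≤ 3 * L / 20 := by
    have := le_max_right (2:ℝ) ((20/3) * B)
    rw [hLdef]
    linarith
  set aa : ℝ := (γ:ℝ) * ((3 * L / 20) ^ d * V) with haadef
  have haaβ : β ≤ aa := by
    have h1 : B ^ d ≤ (3 * L / 20) ^ d := pow_le_pow_left₀ (by linarith) h3L d
    have h2 : B ≤ B ^ d := le_self_pow₀ hB1 (by omega)
    have h3 : β / ((γ:ℝ) * V) ≤ B := le_max_right _ _
    have h4 : β ≤ B * ((γ:ℝ) * V) := by
      rw [div_le_iff₀ (by positivity)] at h3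
      linarith
    have h5 : B * ((γ:ℝ) * V) ≤ (3 * L / 20) ^ d * ((γ:ℝ) * V) := by
      have : B ≤ (3 * L / 20) ^ d := le_trans h2 h1
      nlinarith [mul_pos hg hVpos]
    rw [haadef]
    nlinarith
  have hβpos : 0 < β := Real.log_pos (by
    have : (0:ℝ) ≤ (N:ℝ) := Nat.cast_nonneg N
    nlinarith)
  have haapos : 0 < aa := lt_of_lt_of_le hβpos haaβ
  -- the cells
  obtain ⟨Cs, -, hCfin, hCcov⟩ :=
    (isCompact_closedBall (0 : EuclideanSpace ℝ (Fin d)) L).elim_finite_subcover_image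
      (b := closedBall (0 : EuclideanSpace ℝ (Fin d)) L)
      (c := fun y => ball y (1/2))
      (fun y _ => isOpen_ball)
      (fun x hx => mem_biUnion hx (mem_ball_self (by norm_num)))
  set l : List (EuclideanSpace ℝ (Fin d)) := hCfin.toFinset.toList with hldef
  set m : ℕ := l.length with hmdef
  set Z : Set (EuclideanSpace ℝ (Fin d)) := {x | 1 ≤ ‖x‖ ∧ ‖x‖ < L} with hZdef
  have hZmeas : MeasurableSet Z := by
    have : Z = (fun x : EuclideanSpace ℝ (Fin d) => ‖x‖) ⁻¹' (Set.Ico 1 L) := rfl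
    rw [this]
    exact measurableSet_Ico.preimage measurable_norm
  set fcell : ℕ → Set (EuclideanSpace ℝ (Fin d)) :=
    fun n => Z ∩ ball (l.getD n 0) (1/2) with hfcdef
  set cell : ℕ → Set (EuclideanSpace ℝ (Fin d)) :=
    fun n => fcell n \ ⋃ (k : ℕ) (_ : k < n), fcell k with hcelldef
  have hfc_meas : ∀ n, MeasurableSet (fcell n) := fun n => hZmeas.inter measurableSet_ball
  have hcell_meas : ∀ n, MeasurableSet (cell n) := fun n =>
    (hfc_meas n).diff (MeasurableSet.biUnion (to_countable _) (fun k _ => hfc_meas k))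
  have hcell_sub : ∀ n, cell n ⊆ fcell n := fun n => diff_subset
  have hcell_Z : ∀ n, cell n ⊆ Z := fun n => (hcell_sub n).trans inter_subset_left
  have hZball : Z ⊆ closedBall (0 : EuclideanSpace ℝ (Fin d)) L :=
    fun x hx => mem_closedBall_zero_iff.mpr hx.2.le
  have hcell_bdd : ∀ n, Bornology.IsBounded (cell n) :=
    fun n => (isBounded_closedBall).subset ((hcell_Z n).trans hZball)
  have hcell_diam : ∀ n, ∀ x ∈ cell n, ∀ y ∈ cell n, dist x y < 1 := by
    intro n x hx y hy
    have hx' := (hcell_sub n hx).2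
    have hy' := (hcell_sub n hy).2
    rw [mem_ball] at hx' hy'
    calc dist x y ≤ dist x (l.getD n 0) + dist (l.getD n 0) y := dist_triangle _ _ _
      _ < 1 := by rw [dist_comm (l.getD n 0) y]; linarith
  have hcell_cov : ∀ t : EuclideanSpace ℝ (Fin d), 1 ≤ ‖t‖ → ‖t‖ < L →
      ∃ i, i < m ∧ t ∈ cell i := by
    intro t h1 h2
    have htZ : t ∈ Z := ⟨h1, h2⟩
    obtain ⟨y, hyCs, hty⟩ := mem_iUnion₂.mp (hCcov (hZball htZ))
    have hyl : y ∈ l := by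
      rw [hldef, Finset.mem_toList, Set.Finite.mem_toFinset]
      exact hyCs
    obtain ⟨j, hj, hjy⟩ := List.mem_iff_getElem.mp hyl
    have htf : t ∈ fcell j := by
      refine ⟨htZ, ?_⟩
      rw [List.getD_eq_getElem l 0 hj, hjy]
      exact hty
    have hex : ∃ n, t ∈ fcell n := ⟨j, htf⟩
    refine ⟨Nat.find hex, lt_of_le_of_lt (Nat.find_min' hex htf) hj, Nat.find_spec hex, ?_⟩
    intro hmem
    obtain ⟨k, hk⟩ := mem_iUnion.mp hmem
    obtain ⟨hklt, hkm⟩ := mem_iUnion.mp hk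
    exact Nat.find_min hex hklt hkm
  have hcell_disj : ∀ i j : ℕ, i ≠ j → Disjoint (cell i) (cell j) := by
    have key : ∀ i j : ℕ, i < j → Disjoint (cell i) (cell j) := by
      intro i j hij
      rw [Set.disjoint_left]
      intro x hxi hxj
      exact hxj.2 (mem_iUnion.mpr ⟨i, mem_iUnion.mpr ⟨hij, hcell_sub i hxi⟩⟩)
    intro i j hij
    rcases lt_or_gt_of_ne hij with h | h
    · exact key i j h
    · exact (key j i h).symm
  -- the far-away balls
  set Bout : ℕ → EuclideanSpace ℝ (Fin d) → Set (EuclideanSpace ℝ (Fin d)) :=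
    fun n y => ball ((2 ^ n * L) • y) (3 * (2 ^ n * L) / 20) with hBoutdef
  have hQpos : ∀ n : ℕ, (0:ℝ) < 2 ^ n * L := fun n => by positivity
  have hQL : ∀ n : ℕ, L ≤ 2 ^ n * L := fun n => by
    nlinarith [one_le_pow₀ (M₀ := ℝ) (a := 2) (n := n) one_le_two]
  have hBout_meas : ∀ n y, MeasurableSet (Bout n y) := by
    intro n y
    simp only [hBoutdef]
    exact measurableSet_ball
  have hBout_bdd : ∀ n y, Bornology.IsBounded (Bout n y) := by
    intro n y
    simp only [hBoutdef]
    exact isBounded_ball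
  have hBout_norm : ∀ n : ℕ, ∀ y ∈ Ys, ∀ w ∈ Bout n y, L < ‖w‖ := by
    intro n y hy w hw
    have hyK : 5/4 ≤ ‖y‖ := (hYsubK hy).1
    have hw' : dist w ((2 ^ n * L) • y) < 3 * (2 ^ n * L) / 20 := hw
    have hxy : ‖(2 ^ n * L) • y‖ = (2 ^ n * L) * ‖y‖ := by
      rw [norm_smul, Real.norm_eq_abs, abs_of_pos (hQpos n)]
    have h1 : ‖(2 ^ n * L) • y‖ - ‖w‖ ≤ dist w ((2 ^ n * L) • y) := by
      rw [dist_comm, dist_eq_norm]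
      exact norm_sub_norm_le _ _
    nlinarith [hQL n, hQpos n]
  -- the events
  set Af : (Fin m → ℕ) → Set (Measure (EuclideanSpace ℝ (Fin d))) := fun f =>
    {ν | ν (ball 0 1) = 0 ∧ ∀ i : Fin m, ν (cell i.1) = f i} with hAfdef
  set A : Set (Measure (EuclideanSpace ℝ (Fin d))) :=
    {ν | ν (ball 0 1) = 0 ∧ ∀ i : Fin m, ∃ k : ℕ, k ≠ 1 ∧ ν (cell i.1) = k} with hAdef
  have hmeas_eval : ∀ (Bs : Set (EuclideanSpace ℝ (Fin d))), MeasurableSet Bs → ∀ c : ℝ≥0∞,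
      MeasurableSet {ν : Measure (EuclideanSpace ℝ (Fin d)) | ν Bs = c} := by
    intro Bs hBs c
    exact Measure.measurable_coe hBs (measurableSet_singleton c)
  have hAf_meas : ∀ f, MeasurableSet (Af f) := by
    intro f
    have heq : Af f = {ν : Measure (EuclideanSpace ℝ (Fin d)) | ν (ball 0 1) = 0} ∩
        ⋂ i : Fin m, {ν : Measure (EuclideanSpace ℝ (Fin d)) | ν (cell i.1) = f i} := by
      ext ν
      simp only [hAfdef, mem_setOf_eq, mem_inter_iff, mem_iInter]
    rw [heq]
    exact (hmeas_eval _ measurableSet_ball 0).inter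
      (MeasurableSet.iInter fun i => hmeas_eval _ (hcell_meas i.1) (f i))
  have hA_eq : A = ⋃ (f : {f : Fin m → ℕ // ∀ i, f i ≠ 1}), Af f.1 := by
    ext ν
    simp only [hAdef, hAfdef, mem_setOf_eq, mem_iUnion]
    constructor
    · rintro ⟨h0, h⟩
      exact ⟨⟨fun i => (h i).choose, fun i => (h i).choose_spec.1⟩, h0,
        fun i => (h i).choose_spec.2⟩
    · rintro ⟨⟨f, hf⟩, h0, h⟩
      exact ⟨h0, fun i => ⟨f i, hf i, h i⟩⟩
  have hAf_disj : Pairwise (Function.onFun Disjoint fun f : {f : Fin m → ℕ // ∀ i, f i ≠ 1} => Af f.1) := by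
    intro f g hfg
    rw [Function.onFun, Set.disjoint_left]
    intro ν hνf hνg
    apply hfg
    apply Subtype.ext
    funext i
    have h1 := hνf.2 i
    have h2 := hνg.2 i
    rw [h1] at h2
    exact_mod_cast h2
  -- hPoisson applied to the Af events
  set D : Fin (m + 1) → Set (EuclideanSpace ℝ (Fin d)) :=
    Fin.cons (ball 0 1) (fun i : Fin m => cell i.1) with hDdef
  have hD_meas : ∀ i, MeasurableSet (D i) := by
    intro i
    rcases Fin.eq_zero_or_eq_succ i with rfl | ⟨i', rfl⟩
    · simpa [hDdef] using measurableSet_ball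
    · simpa [hDdef] using hcell_meas i'.1
  have hD_bdd : ∀ i, Bornology.IsBounded (D i) := by
    intro i
    rcases Fin.eq_zero_or_eq_succ i with rfl | ⟨i', rfl⟩
    · simpa [hDdef] using isBounded_ball
    · simpa [hDdef] using hcell_bdd i'.1
  have hball_cell_disj : ∀ a : ℕ, Disjoint (ball (0:EuclideanSpace ℝ (Fin d)) 1) (cell a) := by
    intro a
    rw [Set.disjoint_left]
    intro x hx hxc
    have h1 := (hcell_Z a hxc).1
    rw [mem_ball_zero_iff] at hx
    linarith
  have hD_disj : Pairwise (Function.onFun Disjoint D) := by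
    intro i j hij
    rcases Fin.eq_zero_or_eq_succ i with rfl | ⟨i', rfl⟩ <;>
      rcases Fin.eq_zero_or_eq_succ j with rfl | ⟨j', rfl⟩
    · exact absurd rfl hij
    · simpa [Function.onFun, hDdef] using hball_cell_disj j'.1
    · simpa [Function.onFun, hDdef] using (hball_cell_disj i'.1).symm
    · have hne : i'.1 ≠ j'.1 := by
        intro h
        exact hij (congrArg Fin.succ (Fin.val_injective h))
      simpa [Function.onFun, hDdef] using hcell_disj i'.1 j'.1 hne
  have hAf_event : ∀ f : Fin m → ℕ,
      Af f = {ν : Measure (EuclideanSpace ℝ (Fin d)) |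
        ∀ i, ν (D i) = ((Fin.cons 0 f : Fin (m+1) → ℕ) i)} := by
    intro f
    ext ν
    simp only [hAfdef, mem_setOf_eq]
    constructor
    · rintro ⟨h0, h⟩ i
      rcases Fin.eq_zero_or_eq_succ i with rfl | ⟨i', rfl⟩
      · simpa [hDdef] using h0
      · simpa [hDdef] using h i'
    · intro h
      refine ⟨by simpa [hDdef] using h 0, fun i => by simpa [hDdef] using h i.succ⟩
  have hPAf : ∀ f : Fin m → ℕ, P (Af f) =
      ∏ i : Fin (m+1),
        ENNReal.ofReal (Real.exp (-(((γ : ℝ≥0∞) • volume) (D i)).toReal))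
          * (((γ : ℝ≥0∞) • volume) (D i)) ^ ((Fin.cons 0 f : Fin (m+1) → ℕ) i)
          / (Nat.factorial ((Fin.cons 0 f : Fin (m+1) → ℕ) i) : ℝ≥0∞) := by
    intro f
    rw [hAf_event f]
    exact hPoisson (m+1) D hD_meas hD_bdd hD_disj (Fin.cons 0 f)
  have hPA0 : 0 < P A := by
    have hsub : Af (fun _ => 0) ⊆ A := by
      rintro ν ⟨h0, h⟩
      exact ⟨h0, fun i => ⟨0, by norm_num, h i⟩⟩
    refine lt_of_lt_of_le ?_ (measure_mono hsub)
    rw [hPAf]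
    rw [pos_iff_ne_zero, Finset.prod_ne_zero_iff]
    intro i _
    have hzero : (Fin.cons 0 (fun _ => (0:ℕ)) : Fin (m+1) → ℕ) i = 0 := by
      rcases Fin.eq_zero_or_eq_succ i with rfl | ⟨i', rfl⟩ <;> simp
    rw [hzero]
    simp only [pow_zero, mul_one, Nat.factorial_zero, Nat.cast_one, div_one]
    exact (ENNReal.ofReal_pos.mpr (Real.exp_pos _)).ne'
  -- volume computation for the far-away balls
  have hvol : ∀ (n : ℕ) (y : EuclideanSpace ℝ (Fin d)),
      (((γ : ℝ≥0∞) • volume) (Bout n y)).toReal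
        = (γ:ℝ) * ((3 * (2^n * L) / 20) ^ d * V) := by
    intro n y
    rw [Measure.smul_apply, smul_eq_mul]
    have hb : Bout n y = ball ((2 ^ n * L) • y) (3 * (2 ^ n * L) / 20) := by
      simp only [hBoutdef]
    rw [hb, Measure.addHaar_ball volume _ (by positivity), finrank_euclideanSpace_fin,
      ENNReal.toReal_mul, ENNReal.toReal_mul, ENNReal.coe_toReal,
      ENNReal.toReal_ofReal (by positivity)]
  set pn : ℕ → ℝ≥0∞ :=
    fun n => ENNReal.ofReal (Real.exp (-((γ:ℝ) * ((3 * (2^n * L) / 20) ^ d * V)))) with hpndef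
  have hkey : ∀ n : ℕ, ∀ y ∈ Ys, ∀ f : Fin m → ℕ,
      P (Af f ∩ {ν | ν (Bout n y) = 0}) = pn n * P (Af f) := by
    intro n y hy f
    set G : Fin (m + 2) → Set (EuclideanSpace ℝ (Fin d)) := Fin.cons (Bout n y) D with hGdef
    have hG_meas : ∀ i, MeasurableSet (G i) := by
      intro i
      rcases Fin.eq_zero_or_eq_succ i with rfl | ⟨i', rfl⟩
      · simpa [hGdef] using hBout_meas n y
      · simpa [hGdef] using hD_meas i'
    have hG_bdd : ∀ i, Bornology.IsBounded (G i) := by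
      intro i
      rcases Fin.eq_zero_or_eq_succ i with rfl | ⟨i', rfl⟩
      · simpa [hGdef] using hBout_bdd n y
      · simpa [hGdef] using hD_bdd i'
    have hD_normle : ∀ i, ∀ x ∈ D i, ‖x‖ ≤ L := by
      intro i x hx
      rcases Fin.eq_zero_or_eq_succ i with rfl | ⟨i', rfl⟩
      · have : x ∈ ball (0:EuclideanSpace ℝ (Fin d)) 1 := by simpa [hDdef] using hx
        rw [mem_ball_zero_iff] at this
        linarith
      · have : x ∈ cell i'.1 := by simpa [hDdef] using hx
        exact ((hcell_Z _ this).2).le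
    have hBoutD_disj : ∀ i : Fin (m+1), Disjoint (Bout n y) (D i) := by
      intro i
      rw [Set.disjoint_left]
      intro x hx hxD
      have h1 := hBout_norm n y hy x hx
      have h2 := hD_normle i x hxD
      linarith
    have hG_disj : Pairwise (Function.onFun Disjoint G) := by
      intro i j hij
      rcases Fin.eq_zero_or_eq_succ i with rfl | ⟨i', rfl⟩ <;>
        rcases Fin.eq_zero_or_eq_succ j with rfl | ⟨j', rfl⟩
      · exact absurd rfl hij
      · simpa [Function.onFun, hGdef] using hBoutD_disj j'
      · simpa [Function.onFun, hGdef] using (hBoutD_disj i').symm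
      · have hne : i' ≠ j' := by
          intro h
          exact hij (congrArg Fin.succ h)
        simpa [Function.onFun, hGdef] using hD_disj hne
    have hevent : {ν : Measure (EuclideanSpace ℝ (Fin d)) |
        ∀ i, ν (G i) = ((Fin.cons 0 (Fin.cons 0 f) : Fin (m+2) → ℕ) i)}
          = Af f ∩ {ν | ν (Bout n y) = 0} := by
      ext ν
      simp only [mem_setOf_eq, mem_inter_iff]
      constructor
      · intro h
        refine ⟨?_, by simpa [hGdef] using h 0⟩
        rw [hAf_event f]
        intro i
        simpa [hGdef] using h i.succ
      · rintro ⟨hνAf, h0⟩ i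
        rw [hAf_event f] at hνAf
        rcases Fin.eq_zero_or_eq_succ i with rfl | ⟨i', rfl⟩
        · simpa [hGdef] using h0
        · simpa [hGdef] using hνAf i'
    have hp2 := hPoisson (m+2) G hG_meas hG_bdd hG_disj (Fin.cons 0 (Fin.cons 0 f))
    rw [hevent] at hp2
    rw [hp2, Fin.prod_univ_succ]
    have hterm0 : ENNReal.ofReal (Real.exp (-(((γ : ℝ≥0∞) • volume) (G 0)).toReal))
        * (((γ : ℝ≥0∞) • volume) (G 0)) ^ ((Fin.cons 0 (Fin.cons 0 f) : Fin (m+2) → ℕ) 0)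
        / (Nat.factorial ((Fin.cons 0 (Fin.cons 0 f) : Fin (m+2) → ℕ) 0) : ℝ≥0∞) = pn n := by
      simp only [hGdef, Fin.cons_zero, pow_zero, mul_one, Nat.factorial_zero, Nat.cast_one,
        div_one]
      rw [hvol n y]
    have hrest : ∀ i : Fin (m+1),
        ENNReal.ofReal (Real.exp (-(((γ : ℝ≥0∞) • volume) (G i.succ)).toReal))
          * (((γ : ℝ≥0∞) • volume) (G i.succ)) ^ ((Fin.cons 0 (Fin.cons 0 f) : Fin (m+2) → ℕ) i.succ)
          / (Nat.factorial ((Fin.cons 0 (Fin.cons 0 f) : Fin (m+2) → ℕ) i.succ) : ℝ≥0∞)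
        = ENNReal.ofReal (Real.exp (-(((γ : ℝ≥0∞) • volume) (D i)).toReal))
          * (((γ : ℝ≥0∞) • volume) (D i)) ^ ((Fin.cons 0 f : Fin (m+1) → ℕ) i)
          / (Nat.factorial ((Fin.cons 0 f : Fin (m+1) → ℕ) i) : ℝ≥0∞) := by
      intro i
      simp only [hGdef, Fin.cons_succ]
    rw [hterm0]
    congr 1
    rw [Finset.prod_congr rfl (fun i _ => hrest i), ← hPAf f]
  -- the A-level identity
  haveI : Countable ↥Ys := hYfin.countable.to_subtype
  have hAkey : ∀ n : ℕ, ∀ y ∈ Ys, P (A ∩ {ν | ν (Bout n y) = 0}) = pn n * P A := by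
    intro n y hy
    have hevm : MeasurableSet {ν : Measure (EuclideanSpace ℝ (Fin d)) | ν (Bout n y) = 0} :=
      hmeas_eval _ (hBout_meas n y) 0
    have hdisj2 : Pairwise (Function.onFun Disjoint fun f : {f : Fin m → ℕ // ∀ i, f i ≠ 1} =>
        Af f.1 ∩ {ν : Measure (EuclideanSpace ℝ (Fin d)) | ν (Bout n y) = 0}) :=
      fun f g hfg => ((hAf_disj hfg).mono inter_subset_left inter_subset_left)
    have hmeas2 : ∀ f : {f : Fin m → ℕ // ∀ i, f i ≠ 1},
        MeasurableSet (Af f.1 ∩ {ν : Measure (EuclideanSpace ℝ (Fin d)) | ν (Bout n y) = 0}) :=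
      fun f => (hAf_meas f.1).inter hevm
    rw [hA_eq, Set.iUnion_inter, measure_iUnion hdisj2 hmeas2]
    rw [measure_iUnion hAf_disj (fun f => hAf_meas f.1)]
    rw [← ENNReal.tsum_mul_left]
    exact tsum_congr (fun f => hkey n y hy f.1)
  -- summing the error terms
  set qq : ℝ≥0∞ := ENNReal.ofReal (Real.exp (-aa)) with hqqdef
  have hgeom : ∀ n : ℕ, aa * ((n:ℝ)+1) ≤ (γ:ℝ) * ((3 * (2^n * L) / 20) ^ d * V) := by
    intro n
    have h1 : (3 * (2^n * L) / 20) ^ d = (3 * L / 20) ^ d * ((2:ℝ)^n) ^ d := by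
      rw [← mul_pow]
      congr 1
      ring
    have h3 : ((n:ℝ)+1) ≤ (2:ℝ)^n := by
      have := @Nat.lt_two_pow_self n
      have : (n:ℝ) + 1 ≤ ((2^n : ℕ) : ℝ) := by exact_mod_cast this
      push_cast at this
      linarith
    have h4 : (2:ℝ)^n ≤ ((2:ℝ)^n)^d := le_self_pow₀ (one_le_pow₀ one_le_two) (by omega)
    have h2 : ((n:ℝ) + 1) ≤ ((2:ℝ)^n) ^ d := by linarith
    have hX : (0:ℝ) ≤ (γ:ℝ) * ((3*L/20)^d * V) := by positivity
    calc aa * ((n:ℝ)+1) = ((γ:ℝ) * ((3*L/20)^d * V)) * ((n:ℝ)+1) := by rw [haadef]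
      _ ≤ ((γ:ℝ) * ((3*L/20)^d * V)) * (((2:ℝ)^n)^d) := mul_le_mul_of_nonneg_left h2 hX
      _ = (γ:ℝ) * ((3 * (2^n*L) / 20)^d * V) := by rw [h1]; ring
  have hpn_le : ∀ n : ℕ, pn n ≤ qq ^ (n + 1) := by
    intro n
    have hreal : Real.exp (-((γ:ℝ) * ((3 * (2^n * L) / 20) ^ d * V))) ≤ Real.exp (-aa) ^ (n+1) := by
      rw [← Real.exp_nat_mul]
      apply Real.exp_le_exp.mpr
      have h := hgeom n
      push_cast
      linarith
    calc pn n = ENNReal.ofReal (Real.exp (-((γ:ℝ) * ((3 * (2^n * L) / 20) ^ d * V)))) := rfl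
      _ ≤ ENNReal.ofReal (Real.exp (-aa) ^ (n+1)) := ENNReal.ofReal_le_ofReal hreal
      _ = qq ^ (n+1) := ENNReal.ofReal_pow (Real.exp_nonneg _) _
  have hqq_le : qq ≤ (2 * ((N:ℝ≥0∞) + 1))⁻¹ := by
    have hx : (0:ℝ) < 2 * ((N:ℝ) + 1) := by positivity
    have h1 : Real.exp (-aa) ≤ (2 * ((N:ℝ)+1))⁻¹ := by
      rw [Real.exp_neg]
      apply inv_anti₀ hx
      calc 2 * ((N:ℝ)+1) = Real.exp β := by rw [hβdef, Real.exp_log hx]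
        _ ≤ Real.exp aa := Real.exp_le_exp.mpr haaβ
    calc qq ≤ ENNReal.ofReal ((2 * ((N:ℝ)+1))⁻¹) := ENNReal.ofReal_le_ofReal h1
      _ = (ENNReal.ofReal (2 * ((N:ℝ)+1)))⁻¹ := ENNReal.ofReal_inv_of_pos hx
      _ = (2 * ((N:ℝ≥0∞)+1))⁻¹ := by
          congr 1
          rw [ENNReal.ofReal_mul (by norm_num), ENNReal.ofReal_add (Nat.cast_nonneg N) zero_le_one]
          norm_num [ENNReal.ofReal_natCast]
  have hqq2 : qq ≤ 2⁻¹ := by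
    refine hqq_le.trans (ENNReal.inv_le_inv.mpr ?_)
    exact le_mul_of_one_le_right zero_le le_add_self
  have hinv2 : (1 - qq)⁻¹ ≤ 2 := by
    have hsub1 : (2:ℝ≥0∞)⁻¹ ≤ 1 - qq := by
      have := tsub_le_tsub_left hqq2 (1:ℝ≥0∞)
      rwa [ENNReal.one_sub_inv_two] at this
    calc (1 - qq)⁻¹ ≤ ((2:ℝ≥0∞)⁻¹)⁻¹ := ENNReal.inv_le_inv.mpr hsub1
      _ = 2 := inv_inv _
  set C : ℝ≥0∞ := ∑' (z : ℕ × ↥Ys), pn z.1 with hCdef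
  have hC_le : C ≤ (N:ℝ≥0∞) * ((N:ℝ≥0∞) + 1)⁻¹ := by
    have h1 : C = ∑' (n : ℕ), ∑' (_ : ↥Ys), pn n := by
      rw [hCdef]
      exact ENNReal.tsum_prod (f := fun n (_ : ↥Ys) => pn n)
    have h2 : ∀ n : ℕ, ∑' (_ : ↥Ys), pn n = (N:ℝ≥0∞) * pn n := by
      intro n
      rw [tsum_fintype, Finset.sum_const, nsmul_eq_mul, Finset.card_univ]
    calc C = ∑' (n : ℕ), (N:ℝ≥0∞) * pn n := by rw [h1]; exact tsum_congr h2
      _ = (N:ℝ≥0∞) * ∑' (n : ℕ), pn n := ENNReal.tsum_mul_left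
      _ ≤ (N:ℝ≥0∞) * ∑' (n : ℕ), qq ^ (n+1) := by
          exact mul_le_mul_right (ENNReal.tsum_le_tsum hpn_le) _
      _ = (N:ℝ≥0∞) * (qq * (1 - qq)⁻¹) := by
          congr 1
          rw [← ENNReal.tsum_geometric qq, ← ENNReal.tsum_mul_left]
          exact tsum_congr (fun n => (pow_succ' qq n).symm ▸ rfl)
      _ ≤ (N:ℝ≥0∞) * ((2 * ((N:ℝ≥0∞)+1))⁻¹ * 2) := by
          exact mul_le_mul_right (mul_le_mul' hqq_le hinv2) _
      _ = (N:ℝ≥0∞) * ((N:ℝ≥0∞)+1)⁻¹ := by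
          congr 1
          rw [ENNReal.mul_inv (Or.inl (by norm_num)) (Or.inl (by norm_num))]
          rw [mul_comm ((2:ℝ≥0∞)⁻¹) _, mul_assoc, ENNReal.inv_mul_cancel (by norm_num) (by norm_num)]
          rw [mul_one]
  have hC_lt1 : C < 1 := by
    refine lt_of_le_of_lt hC_le ?_
    rw [← div_eq_mul_inv]
    rw [ENNReal.div_lt_iff (Or.inl (by simp)) (Or.inl (by simp))]
    rw [one_mul]
    exact ENNReal.lt_add_right (ENNReal.natCast_ne_top N) one_ne_zero
  -- conclusion
  set F' : Set (Measure (EuclideanSpace ℝ (Fin d))) :=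
    {ν | ∀ n : ℕ, ∀ y ∈ Ys, ν (Bout n y) ≠ 0} with hF'def
  have hsplit : A ⊆ (A ∩ F') ∪
      ⋃ (z : ℕ × ↥Ys), (A ∩ {ν : Measure (EuclideanSpace ℝ (Fin d)) | ν (Bout z.1 z.2.1) = 0}) := by
    intro ν hν
    by_cases h : ν ∈ F'
    · exact Or.inl ⟨hν, h⟩
    · simp only [hF'def, mem_setOf_eq, not_forall] at h
      obtain ⟨n, y, hy, h0⟩ := h
      rw [not_not] at h0
      exact Or.inr (mem_iUnion.mpr ⟨(n, ⟨y, hy⟩), ⟨hν, h0⟩⟩)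
  have hPbound : P A ≤ P (A ∩ F') + C * P A := by
    calc P A ≤ P ((A ∩ F') ∪ ⋃ (z : ℕ × ↥Ys),
          (A ∩ {ν : Measure (EuclideanSpace ℝ (Fin d)) | ν (Bout z.1 z.2.1) = 0})) :=
        measure_mono hsplit
      _ ≤ P (A ∩ F') + P (⋃ (z : ℕ × ↥Ys),
          (A ∩ {ν : Measure (EuclideanSpace ℝ (Fin d)) | ν (Bout z.1 z.2.1) = 0})) :=
        measure_union_le _ _
      _ ≤ P (A ∩ F') + ∑' (z : ℕ × ↥Ys),
          P (A ∩ {ν : Measure (EuclideanSpace ℝ (Fin d)) | ν (Bout z.1 z.2.1) = 0}) := by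
        exact add_le_add_right (measure_iUnion_le _) _
      _ = P (A ∩ F') + ∑' (z : ℕ × ↥Ys), pn z.1 * P A := by
        congr 1
        exact tsum_congr (fun z => hAkey z.1 z.2.1 z.2.2)
      _ = P (A ∩ F') + C * P A := by
        congr 1
        rw [hCdef, ENNReal.tsum_mul_right]
  have hPAF : 0 < P (A ∩ F') := by
    by_contra h
    push_neg at h
    have h0 : P (A ∩ F') = 0 := le_antisymm h zero_le
    rw [h0, zero_add] at hPbound
    have hlt : C * P A < 1 * P A :=
      ENNReal.mul_lt_mul_left hPA0.ne' (measure_ne_top P A) hC_lt1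
    rw [one_mul] at hlt
    exact lt_irrefl _ (lt_of_le_of_lt hPbound hlt)
  have hS : P {ν : Measure (EuclideanSpace ℝ (Fin d)) | ¬ IsSimplePointMeasure ν} = 0 :=
    ae_iff.mp hsimple
  have hincl : A ∩ F' ∩ {ν : Measure (EuclideanSpace ℝ (Fin d)) | IsSimplePointMeasure ν} ⊆
      {ν : Measure (EuclideanSpace ℝ (Fin d)) |
        ¬ ∃ t ∈ msupp ν, ∀ s ∈ msupp ν, s ≠ t → ‖t‖ < ‖t - s‖} := by
    rintro ν ⟨⟨hνA, hνF⟩, hνS⟩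
    refine good_of_config hL2 cell hcell_cov hcell_diam Ys hYcov ν hνS hνA.1 hνA.2 ?_
    intro n y hy
    have := hνF n y hy
    simpa [hBoutdef] using this
  refine lt_of_lt_of_le hPAF ?_
  have hstep1 : A ∩ F' ⊆ (A ∩ F' ∩ {ν : Measure (EuclideanSpace ℝ (Fin d)) | IsSimplePointMeasure ν})
        ∪ {ν : Measure (EuclideanSpace ℝ (Fin d)) | ¬ IsSimplePointMeasure ν} := by
    intro ν hν
    by_cases hs : IsSimplePointMeasure ν
    · exact Or.inl ⟨hν, hs⟩
    · exact Or.inr hs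
  calc P (A ∩ F') ≤ P ((A ∩ F' ∩ {ν : Measure (EuclideanSpace ℝ (Fin d)) | IsSimplePointMeasure ν})
        ∪ {ν : Measure (EuclideanSpace ℝ (Fin d)) | ¬ IsSimplePointMeasure ν}) :=
      measure_mono hstep1
    _ ≤ P (A ∩ F' ∩ {ν : Measure (EuclideanSpace ℝ (Fin d)) | IsSimplePointMeasure ν})
        + P {ν : Measure (EuclideanSpace ℝ (Fin d)) | ¬ IsSimplePointMeasure ν} :=
      measure_union_le _ _
    _ = P (A ∩ F' ∩ {ν : Measure (EuclideanSpace ℝ (Fin d)) | IsSimplePointMeasure ν}) := by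
      rw [hS, add_zero]
    _ ≤ P {ν : Measure (EuclideanSpace ℝ (Fin d)) |
        ¬ ∃ t ∈ msupp ν, ∀ s ∈ msupp ν, s ≠ t → ‖t‖ < ‖t - s‖} := measure_mono hincl
end
end
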